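/- Let N be a positive integer and z a complex number with |z| = 1, z ≠ 1. Then (1/N) · Re[ (z d/dz − N − (1−z^{-N})/(1−z)) Σ_{ℓ=1}^N ℓ² z^ℓ ] = (1/N) · | (1 − (N+1)z^N + N z^{N+1}) / (1−z)² |². -/

import Mathlib

open Finset

/-- Splitting off the top term of a sum over `Icc 1 (n+1)`. -/
lemma sum_Icc_top (n : ℕ) (f : ℕ → ℂ) :
    ∑ m ∈ Icc 1 (n + 1), f m = (∑ m ∈ Icc 1 n, f m) + f (n + 1) := by
  rw [← Finset.insert_Icc_right_eq_Icc_add_one (by omega), Finset.sum_insert (by simp), add_comm]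

/-- Reflection of a weighted geometric sum using `z * w = 1`. -/
lemma refl_gen (z w : ℂ) (h : z * w = 1) (n : ℕ) (f : ℕ → ℂ) :
    z ^ (n + 1) * ∑ m ∈ Icc 1 n, f m * w ^ m = ∑ m ∈ Icc 1 n, f (n + 1 - m) * z ^ m := by
  rw [Finset.mul_sum]
  refine Finset.sum_nbij' (i := fun m => n + 1 - m) (j := fun m => n + 1 - m)
    ?_ ?_ ?_ ?_ ?_
  · intro a ha; simp only [mem_Icc] at ha ⊢; omega
  · intro a ha; simp only [mem_Icc] at ha ⊢; omega
  · intro a ha; simp only [mem_Icc] at ha; show n + 1 - (n + 1 - a) = a; omega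
  · intro a ha; simp only [mem_Icc] at ha; show n + 1 - (n + 1 - a) = a; omega
  · intro a ha
    simp only [mem_Icc] at ha
    have h1 : n + 1 - (n + 1 - a) = a := by omega
    have h2 : z ^ (n + 1) = z ^ (n + 1 - a) * z ^ a := by
      rw [← pow_add]; congr 1; omega
    have h3 : z ^ a * w ^ a = 1 := by rw [← mul_pow, h, one_pow]
    rw [h1, h2]
    calc z ^ (n + 1 - a) * z ^ a * (f a * w ^ a)
        = f a * z ^ (n + 1 - a) * (z ^ a * w ^ a) := by ring
      _ = f a * z ^ (n + 1 - a) := by rw [h3, mul_one]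

lemma refl0 (z w : ℂ) (h : z * w = 1) (n : ℕ) :
    z ^ (n + 1) * ∑ m ∈ Icc 1 n, w ^ m = ∑ m ∈ Icc 1 n, z ^ m := by
  have H := refl_gen z w h n (fun _ => 1)
  simpa using H

lemma refl1 (z w : ℂ) (h : z * w = 1) (n : ℕ) :
    z ^ (n + 1) * ∑ m ∈ Icc 1 n, (m : ℂ) * w ^ m
      = ((n : ℂ) + 1) * (∑ m ∈ Icc 1 n, z ^ m) - ∑ m ∈ Icc 1 n, (m : ℂ) * z ^ m := by
  have H := refl_gen z w h n (fun m => (m : ℂ))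
  rw [H, Finset.mul_sum, ← Finset.sum_sub_distrib]
  refine Finset.sum_congr rfl fun m hm => ?_
  have hm' : m ≤ n + 1 := le_trans (mem_Icc.1 hm).2 (Nat.le_succ n)
  have : ((n + 1 - m : ℕ) : ℂ) = (n : ℂ) + 1 - m := by
    push_cast [Nat.cast_sub hm']; ring
  rw [this]; ring

lemma refl2 (z w : ℂ) (h : z * w = 1) (n : ℕ) :
    z ^ (n + 1) * ∑ m ∈ Icc 1 n, (m : ℂ) ^ 2 * w ^ m
      = ((n : ℂ) + 1) ^ 2 * (∑ m ∈ Icc 1 n, z ^ m)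
        - 2 * ((n : ℂ) + 1) * (∑ m ∈ Icc 1 n, (m : ℂ) * z ^ m)
        + ∑ m ∈ Icc 1 n, (m : ℂ) ^ 2 * z ^ m := by
  have H := refl_gen z w h n (fun m => (m : ℂ) ^ 2)
  rw [H, Finset.mul_sum, Finset.mul_sum, ← Finset.sum_sub_distrib, ← Finset.sum_add_distrib]
  refine Finset.sum_congr rfl fun m hm => ?_
  have hm' : m ≤ n + 1 := le_trans (mem_Icc.1 hm).2 (Nat.le_succ n)
  have : ((n + 1 - m : ℕ) : ℂ) = (n : ℂ) + 1 - m := by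
    push_cast [Nat.cast_sub hm']; ring
  rw [this]; ring

/-- The key symmetric identity. -/
lemma key_identity (z w : ℂ) (h : z * w = 1) (N : ℕ) :
    (∑ ℓ ∈ Icc 1 N, (ℓ : ℂ) ^ 3 * z ^ ℓ) + (∑ ℓ ∈ Icc 1 N, (ℓ : ℂ) ^ 3 * w ^ ℓ)
      - (N : ℂ) * ∑ ℓ ∈ Icc 1 N, (ℓ : ℂ) ^ 2 * z ^ ℓ
      - (N : ℂ) * ∑ ℓ ∈ Icc 1 N, (ℓ : ℂ) ^ 2 * w ^ ℓ
      + (∑ m ∈ Icc 1 N, w ^ m) * (∑ ℓ ∈ Icc 1 N, (ℓ : ℂ) ^ 2 * z ^ ℓ)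
      + (∑ m ∈ Icc 1 N, z ^ m) * (∑ ℓ ∈ Icc 1 N, (ℓ : ℂ) ^ 2 * w ^ ℓ)
    = 2 * (∑ ℓ ∈ Icc 1 N, (ℓ : ℂ) * z ^ ℓ) * (∑ ℓ ∈ Icc 1 N, (ℓ : ℂ) * w ^ ℓ) := by
  induction N with
  | zero => simp
  | succ n ih =>
    have h' : w * z = 1 := by rw [mul_comm]; exact h
    have r0z := refl0 z w h n
    have r0w := refl0 w z h' n
    have r1z := refl1 z w h n
    have r1w := refl1 w z h' n
    have r2z := refl2 z w h n
    have r2w := refl2 w z h' n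
    simp only [sum_Icc_top]
    push_cast
    linear_combination ih + r2z + r2w + ((n : ℂ) + 1) ^ 2 * (r0z + r0w)
      - 2 * ((n : ℂ) + 1) * (r1z + r1w)

lemma geom_aux (z w : ℂ) (h : z * w = 1) (N : ℕ) :
    (1 - z) * ∑ m ∈ Icc 1 N, w ^ m = w ^ N - 1 := by
  induction N with
  | zero => simp
  | succ n ih =>
    rw [sum_Icc_top]
    linear_combination ih - w ^ n * h

lemma deriv_geom (z : ℂ) (N : ℕ) :
    z * (1 - ((N : ℂ) + 1) * z ^ N + (N : ℂ) * z ^ (N + 1))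
      = (1 - z) ^ 2 * ∑ ℓ ∈ Icc 1 N, (ℓ : ℂ) * z ^ ℓ := by
  induction N with
  | zero => simp
  | succ n ih =>
    rw [sum_Icc_top]
    push_cast
    linear_combination ih

/-- For `|z| = 1`, `z ≠ 1`, the Euler-operator identity
`(1/N) Re[(z d/dz - N - (1-z^{-N})/(1-z)) Σ_{ℓ=1}^N ℓ² z^ℓ]
  = (1/N) |(1-(N+1)z^N+Nz^{N+1})/(1-z)²|²`,
where `z d/dz Σ ℓ² z^ℓ = Σ ℓ³ z^ℓ`. -/
theorem euler_operator_geometric_identity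
    (N : ℕ) (hN : 1 ≤ N) (z : ℂ) (hz : ‖z‖ = 1) (hz1 : z ≠ 1) :
    (1 / N : ℝ) *
        ((∑ ℓ ∈ Icc 1 N, (ℓ : ℂ) ^ 3 * z ^ ℓ)
          - (N : ℂ) * ∑ ℓ ∈ Icc 1 N, (ℓ : ℂ) ^ 2 * z ^ ℓ
          - ((1 - z ^ (-(N : ℤ))) / (1 - z)) * ∑ ℓ ∈ Icc 1 N, (ℓ : ℂ) ^ 2 * z ^ ℓ).re
      = (1 / N : ℝ) *
          ‖(1 - ((N : ℂ) + 1) * z ^ N + (N : ℂ) * z ^ (N + 1)) / (1 - z) ^ 2‖ ^ 2 := by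
  have hz0 : z ≠ 0 := by
    intro h0; rw [h0] at hz; simp at hz
  set w : ℂ := (starRingEnd ℂ) z with hw
  have hconj : z * w = 1 := by
    rw [hw, Complex.mul_conj]
    norm_cast
    rw [Complex.normSq_eq_norm_sq, hz]; norm_num
  have h1z : (1 : ℂ) - z ≠ 0 := sub_ne_zero.mpr (Ne.symm hz1)
  have hwinv : z⁻¹ = w := inv_eq_of_mul_eq_one_right hconj
  -- rewrite the negative power
  have hzn : z ^ (-(N : ℤ)) = w ^ N := by
    rw [zpow_neg, zpow_natCast, ← inv_pow, hwinv]
  -- the quotient equals minus a geometric sum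
  have hQ : (1 - z ^ (-(N : ℤ))) / (1 - z) = -∑ m ∈ Icc 1 N, w ^ m := by
    rw [hzn, div_eq_iff h1z]
    linear_combination geom_aux z w hconj N
  -- sums abbreviations
  set S3 := ∑ ℓ ∈ Icc 1 N, (ℓ : ℂ) ^ 3 * z ^ ℓ with hS3
  set S2 := ∑ ℓ ∈ Icc 1 N, (ℓ : ℂ) ^ 2 * z ^ ℓ with hS2
  set S1 := ∑ ℓ ∈ Icc 1 N, (ℓ : ℂ) * z ^ ℓ with hS1
  set B0 := ∑ m ∈ Icc 1 N, w ^ m with hB0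
  -- conjugates of the sums
  have hc1 : (starRingEnd ℂ) S1 = ∑ ℓ ∈ Icc 1 N, (ℓ : ℂ) * w ^ ℓ := by
    rw [hS1, map_sum]; refine Finset.sum_congr rfl fun m _ => ?_
    simp [hw]
  have hc2 : (starRingEnd ℂ) S2 = ∑ ℓ ∈ Icc 1 N, (ℓ : ℂ) ^ 2 * w ^ ℓ := by
    rw [hS2, map_sum]; refine Finset.sum_congr rfl fun m _ => ?_
    simp [hw]
  have hc3 : (starRingEnd ℂ) S3 = ∑ ℓ ∈ Icc 1 N, (ℓ : ℂ) ^ 3 * w ^ ℓ := by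
    rw [hS3, map_sum]; refine Finset.sum_congr rfl fun m _ => ?_
    simp [hw]
  have hc0 : (starRingEnd ℂ) B0 = ∑ m ∈ Icc 1 N, z ^ m := by
    rw [hB0, map_sum]; refine Finset.sum_congr rfl fun m _ => ?_
    simp [hw]
  -- the key identity, in conjugate form
  set Xc : ℂ := S3 - (N : ℂ) * S2 + B0 * S2 with hXc
  have hkey : Xc + (starRingEnd ℂ) Xc = 2 * (S1 * (starRingEnd ℂ) S1) := by
    have K := key_identity z w hconj N
    rw [hXc, map_add, map_sub, map_mul, map_mul, Complex.conj_natCast, hc3, hc2, hc0, hc1]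
    rw [← hS3, ← hS2, ← hB0] at K
    linear_combination K
  -- real part of Xc
  have hre : Xc.re = Complex.normSq S1 := by
    have h2 : ((2 * Xc.re : ℝ) : ℂ) = ((2 * Complex.normSq S1 : ℝ) : ℂ) := by
      rw [← Complex.add_conj, hkey, Complex.mul_conj]
      push_cast
      ring
    have := Complex.ofReal_inj.mp h2
    linarith
  -- the absolute value on the right
  have habs : (1 - ((N : ℂ) + 1) * z ^ N + (N : ℂ) * z ^ (N + 1)) / (1 - z) ^ 2 = S1 / z := by
    rw [div_eq_div_iff (pow_ne_zero 2 h1z) hz0]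
    linear_combination deriv_geom z N
  have habs2 : ‖(1 - ((N : ℂ) + 1) * z ^ N + (N : ℂ) * z ^ (N + 1)) / (1 - z) ^ 2‖ ^ 2
      = Complex.normSq S1 := by
    rw [habs, norm_div, hz, div_one, Complex.sq_norm]
  rw [habs2, hQ]
  congr 1
  rw [show S3 - (N : ℂ) * S2 - (-B0) * S2 = Xc by rw [hXc]; ring]
  exact hre
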